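/- Let A be a bounded linear operator on H. Then for every real number r ≥ 1, ber(A)^{2r} ≤ (1/4)·ber(|A|^{2r} + |A*|^{2r}) + (1/2)·ber(|A|^r · |A*|^r). -/

import Mathlib

set_option synthInstance.maxHeartbeats 1000000
set_option maxHeartbeats 1000000

open scoped NNReal
open ContinuousLinearMap

lemma tangent_line {r s t : ℝ} (hr : 1 ≤ r) (hs : 0 < s) (ht : 0 ≤ t) :
    r * s ^ (r - 1) * t - (r - 1) * s ^ r ≤ t ^ r := by
  rcases eq_or_lt_of_le hr with heq | hlt
  · rw [← heq]
    simp [Real.rpow_one]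
  · have hr1 : r - 1 ≠ 0 := by linarith
    have hpq : Real.HolderConjugate r (r / (r - 1)) := (Real.holderConjugate_iff_eq_conjExponent hlt).mpr rfl
    have hy := Real.young_inequality_of_nonneg ht (Real.rpow_nonneg hs.le (r - 1)) hpq
    have h1 : (s ^ (r - 1)) ^ (r / (r - 1)) = s ^ r := by
      rw [← Real.rpow_mul hs.le]
      congr 1
      field_simp
    rw [h1] at hy
    have hrpos : (0 : ℝ) < r := by linarith
    have := mul_le_mul_of_nonneg_left hy hrpos.le
    have hq : r / (r / (r - 1)) = r - 1 := by field_simp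
    calc r * s ^ (r - 1) * t - (r - 1) * s ^ r
        = r * (t * s ^ (r - 1)) - (r - 1) * s ^ r := by ring
    _ ≤ r * (t ^ r / r + s ^ r / (r / (r - 1))) - (r - 1) * s ^ r := by nlinarith
    _ = t ^ r := by field_simp; ring

/-- The Berezin number of an operator `T`, relative to the family `k` of
(normalized reproducing kernel) vectors indexed by `Ω`. -/
noncomputable def ber {H : Type*} [NormedAddCommGroup H] [InnerProductSpace ℂ H]
    {Ω : Type*} (k : Ω → H) (T : H →L[ℂ] H) : ℝ :=
  ⨆ lam : Ω, ‖(inner ℂ (T (k lam)) (k lam) : ℂ)‖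

/-- The absolute value `|T| = (T*T)^(1/2)` of a bounded operator. -/
noncomputable def opAbs {H : Type*} [NormedAddCommGroup H] [InnerProductSpace ℂ H]
    [CompleteSpace H] (T : H →L[ℂ] H) : H →L[ℂ] H :=
  CFC.sqrt (adjoint T * T)

local notation "⟪" x ", " y "⟫" => @inner ℂ _ _ x y

section Lemmas

variable {H : Type*} [NormedAddCommGroup H] [InnerProductSpace ℂ H]

lemma my_buzano (u v e : H) (he : ‖e‖ = 1) :
    2 * (‖⟪u, e⟫‖ * ‖⟪e, v⟫‖) ≤ ‖u‖ * ‖v‖ + ‖⟪u, v⟫‖ := by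
  set c : ℂ := ⟪e, v⟫ with hc
  have hinner : ⟪(2 * c) • e, v⟫ = 2 * ((‖c‖ : ℂ) ^ 2) := by
    rw [inner_smul_left, map_mul, ← hc, mul_assoc, RCLike.conj_mul]
    push_cast
    norm_num
    left
    simp [Complex.ext_iff]
  have hre : (⟪(2 * c) • e, v⟫).re = 2 * ‖c‖ ^ 2 := by
    rw [hinner]
    simp [← Complex.ofReal_pow]
  have hns : ‖(2 * c) • e‖ ^ 2 = 4 * ‖c‖ ^ 2 := by
    rw [norm_smul, he, mul_one, norm_mul]
    norm_num; ring
  have hnorm : ‖(2 * c) • e - v‖ = ‖v‖ := by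
    have h1 : ‖(2 * c) • e - v‖ ^ 2 = ‖v‖ ^ 2 := by
      rw [@norm_sub_sq ℂ]
      rw [show RCLike.re ⟪(2 * c) • e, v⟫ = (⟪(2 * c) • e, v⟫).re from rfl, hre, hns]
      ring
    have h2 := norm_nonneg ((2 * c) • e - v)
    nlinarith [norm_nonneg v]
  have expand : ⟪u, (2 * c) • e - v⟫ = 2 * c * ⟪u, e⟫ - ⟪u, v⟫ := by
    rw [inner_sub_right, inner_smul_right]
  have key : ‖2 * c * ⟪u, e⟫ - ⟪u, v⟫‖ ≤ ‖u‖ * ‖v‖ := by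
    rw [← expand]
    calc ‖⟪u, (2 * c) • e - v⟫‖ ≤ ‖u‖ * ‖(2 * c) • e - v‖ := norm_inner_le_norm _ _
    _ = ‖u‖ * ‖v‖ := by rw [hnorm]
  have h3 : ‖2 * c * ⟪u, e⟫‖ = 2 * (‖⟪u, e⟫‖ * ‖c‖) := by
    rw [norm_mul, norm_mul]
    norm_num; ring
  calc 2 * (‖⟪u, e⟫‖ * ‖c‖) = ‖2 * c * ⟪u, e⟫‖ := h3.symm
  _ = ‖(2 * c * ⟪u, e⟫ - ⟪u, v⟫) + ⟪u, v⟫‖ := by rw [sub_add_cancel]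
  _ ≤ ‖2 * c * ⟪u, e⟫ - ⟪u, v⟫‖ + ‖⟪u, v⟫‖ := norm_add_le _ _
  _ ≤ ‖u‖ * ‖v‖ + ‖⟪u, v⟫‖ := by linarith

variable [CompleteSpace H]

lemma inner_re_mono {S T : H →L[ℂ] H} (h : S ≤ T) (x : H) :
    (⟪S x, x⟫).re ≤ (⟪T x, x⟫).re := by
  have h2 := ((le_def S T).mp h).2 x
  simp only [reApplyInnerSelf_apply, sub_apply, inner_sub_left] at h2
  rw [show RCLike.re (⟪T x, x⟫ - ⟪S x, x⟫ : ℂ) = ((⟪T x, x⟫ - ⟪S x, x⟫ : ℂ)).re from rfl] at h2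
  simp only [Complex.sub_re] at h2
  linarith

lemma inner_re_nonneg {T : H →L[ℂ] H} (hT : 0 ≤ T) (x : H) : 0 ≤ (⟪T x, x⟫).re := by
  have := inner_re_mono hT x
  simpa using this

lemma inner_self_real {T : H →L[ℂ] H} (hT : IsSelfAdjoint T) (x : H) :
    ⟪T x, x⟫ = ((⟪T x, x⟫).re : ℂ) := by
  have hsym := (isSelfAdjoint_iff_isSymmetric.mp hT) x x
  have hconj : (starRingEnd ℂ) ⟪T x, x⟫ = ⟪T x, x⟫ := by
    rw [inner_conj_symm]
    exact hsym.symm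
  exact (Complex.conj_eq_iff_re.mp hconj).symm

lemma norm_inner_of_nonneg {T : H →L[ℂ] H} (hT : 0 ≤ T) (x : H) :
    ‖⟪T x, x⟫‖ = (⟪T x, x⟫).re := by
  rw [inner_self_real (IsSelfAdjoint.of_nonneg hT) x, Complex.norm_real]
  exact abs_of_nonneg (inner_re_nonneg hT x)


lemma rpow_eq_cfc_real (T : H →L[ℂ] H) (hT : 0 ≤ T) (r : ℝ) :
    CFC.rpow T r = cfc (fun t : ℝ => (t.toNNReal : ℝ) ^ r) T := by
  rw [show CFC.rpow T r = cfc (fun x : ℝ≥0 => x ^ r) T from rfl, cfc_nnreal_eq_real _ T hT]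
  exact cfc_congr fun t _ => NNReal.coe_rpow _ _

lemma continuous_toNNReal_rpow (r : ℝ) (hr : 0 ≤ r) :
    Continuous (fun t : ℝ => (t.toNNReal : ℝ) ^ r) := by
  have h1 : Continuous (fun x : ℝ≥0 => x ^ r) := NNReal.continuous_rpow_const hr
  exact (NNReal.continuous_coe.comp (h1.comp continuous_real_toNNReal)).congr (fun t => by
    simp [NNReal.coe_rpow])

lemma mccarthy {T : H →L[ℂ] H} (hT : 0 ≤ T) {x : H} (hx : ‖x‖ = 1) {r : ℝ} (hr : 1 ≤ r) :
    (⟪T x, x⟫).re ^ r ≤ (⟪CFC.rpow T r x, x⟫).re := by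
  have hr0 : (0 : ℝ) < r := by linarith
  have hrpow_nonneg : (0 : H →L[ℂ] H) ≤ CFC.rpow T r := CFC.rpow_nonneg
  set t₀ : ℝ := (⟪T x, x⟫).re with ht₀
  have ht₀0 : 0 ≤ t₀ := inner_re_nonneg hT x
  rcases eq_or_lt_of_le ht₀0 with h0 | hpos
  · rw [← h0, Real.zero_rpow hr0.ne']
    exact inner_re_nonneg hrpow_nonneg x
  · set c : ℝ := r * t₀ ^ (r - 1) with hc
    set d : ℝ := (r - 1) * t₀ ^ r with hd
    have hcont : Continuous (fun t : ℝ => (t.toNNReal : ℝ) ^ r) := continuous_toNNReal_rpow r hr0.le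
    have hkey : cfc (fun t : ℝ => c * t - d) T ≤ cfc (fun t : ℝ => (t.toNNReal : ℝ) ^ r) T := by
      refine cfc_mono (fun t ht => ?_) (Continuous.continuousOn (by fun_prop)) hcont.continuousOn
      have htnn : 0 ≤ t := spectrum_nonneg_of_nonneg hT ht
      rw [Real.coe_toNNReal t htnn]
      exact tangent_line hr hpos htnn
    have hT_sa : IsSelfAdjoint T := IsSelfAdjoint.of_nonneg hT
    have heq : cfc (fun t : ℝ => c * t - d) T = c • T - algebraMap ℝ (H →L[ℂ] H) d := by
      rw [cfc_sub _ _ T (by fun_prop) (by fun_prop), cfc_const_mul _ _ T (by fun_prop),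
        cfc_id' ℝ T, cfc_const d T]
    rw [heq, ← rpow_eq_cfc_real T hT r] at hkey
    have hmono := inner_re_mono hkey x
    have hlhs : (⟪(c • T - algebraMap ℝ (H →L[ℂ] H) d) x, x⟫).re = c * t₀ - d := by
      have : (c • T - algebraMap ℝ (H →L[ℂ] H) d) x = c • T x - d • x := by
        rw [Algebra.algebraMap_eq_smul_one]
        simp
      have hxx : ⟪x, x⟫ = (1 : ℂ) := by
        rw [@inner_self_eq_norm_sq_to_K ℂ, hx]
        norm_num
      have hsm : ∀ (a : ℝ) (u : H), a • u = (a : ℂ) • u := fun a u =>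
        RCLike.real_smul_eq_coe_smul (K := ℂ) a u
      rw [this, inner_sub_left, hsm c, hsm d, inner_smul_left, inner_smul_left, hxx]
      simp [Complex.sub_re, Complex.mul_re]
      exact Or.inl rfl
    rw [hlhs] at hmono
    have hfinal : c * t₀ - d = t₀ ^ r := by
      have : t₀ ^ (r - 1) * t₀ = t₀ ^ r := by
        rw [← Real.rpow_add_one hpos.ne' (r - 1)]
        norm_num
      rw [hc, hd]
      nlinarith [this]
    linarith [hmono, hfinal.symm.le]


open Polynomial in
lemma poly_intertwine {A B C : H →L[ℂ] H} (h : A * B = C * A) (q : ℝ[X]) :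
    A * aeval B q = aeval C q * A := by
  have hpow : ∀ n : ℕ, A * B ^ n = C ^ n * A := by
    intro n
    induction n with
    | zero => simp
    | succ n ih =>
      rw [pow_succ, pow_succ, ← mul_assoc, ih, mul_assoc, h, ← mul_assoc]
  induction q using Polynomial.induction_on' with
  | add p q hp hq => rw [map_add, map_add, mul_add, add_mul, hp, hq]
  | monomial n a =>
    rw [aeval_monomial, aeval_monomial, ← mul_assoc,
      show A * (algebraMap ℝ (H →L[ℂ] H)) a = (algebraMap ℝ (H →L[ℂ] H)) a * A from
        (Algebra.commutes a A).symm, mul_assoc, hpow, ← mul_assoc]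

open Polynomial in
lemma cfc_intertwine {A B C : H →L[ℂ] H} (hB : IsSelfAdjoint B) (hC : IsSelfAdjoint C)
    (h : A * B = C * A) (f : ℝ → ℝ) (hf : Continuous f) :
    A * cfc f B = cfc f C * A := by
  by_contra hne
  set D : H →L[ℂ] H := A * cfc f B - cfc f C * A with hD
  have hDne : D ≠ 0 := sub_ne_zero.mpr hne
  have hDpos : 0 < ‖D‖ := norm_pos_iff.mpr hDne
  set ε : ℝ := ‖D‖ / (2 * (‖A‖ + 1)) with hε
  have hεpos : 0 < ε := by positivity
  set s : Set ℝ := spectrum ℝ B ∪ spectrum ℝ C with hs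
  have hscompact : IsCompact s := (spectrum.isCompact B).union (spectrum.isCompact C)
  haveI : CompactSpace s := isCompact_iff_compactSpace.mp hscompact
  obtain ⟨p, hp⟩ : ∃ p : ℝ[X], ∀ t ∈ s, |f t - p.eval t| ≤ ε := by
    have hmem : (ContinuousMap.mk (s.restrict f) (hf.continuousOn.restrict)) ∈
        closure (polynomialFunctions s : Set C(s, ℝ)) := by
      have htop : (polynomialFunctions s).topologicalClosure = ⊤ :=
        polynomialFunctions.topologicalClosure s
      rw [← Subalgebra.topologicalClosure_coe, htop]
      trivial
    obtain ⟨g, hg_mem, hg_dist⟩ := Metric.mem_closure_iff.mp hmem ε hεpos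
    rw [polynomialFunctions_coe] at hg_mem
    obtain ⟨p, rfl⟩ := hg_mem
    refine ⟨p, fun t ht => ?_⟩
    have hd := ContinuousMap.dist_apply_le_dist (f := ContinuousMap.mk (s.restrict f)
      (hf.continuousOn.restrict)) (g := Polynomial.toContinuousMapOnAlgHom s p) ⟨t, ht⟩
    have h2 := hd.trans hg_dist.le
    simp [Real.dist_eq] at h2
    exact h2
  have hnormB : ‖cfc f B - aeval B p‖ ≤ ε := by
    rw [← cfc_polynomial p B hB, ← cfc_sub f p.eval B hf.continuousOn p.continuous.continuousOn]
    refine norm_cfc_le hεpos.le fun t ht => ?_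
    simpa [Real.norm_eq_abs] using hp t (Set.mem_union_left _ ht)
  have hnormC : ‖cfc f C - aeval C p‖ ≤ ε := by
    rw [← cfc_polynomial p C hC, ← cfc_sub f p.eval C hf.continuousOn p.continuous.continuousOn]
    refine norm_cfc_le hεpos.le fun t ht => ?_
    simpa [Real.norm_eq_abs] using hp t (Set.mem_union_right _ ht)
  have hpoly : A * aeval B p = aeval C p * A := poly_intertwine h p
  have hDeq : D = A * (cfc f B - aeval B p) + (aeval C p - cfc f C) * A := by
    rw [hD, mul_sub, sub_mul, hpoly]
    abel
  have hbound : ‖D‖ ≤ 2 * ‖A‖ * ε := by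
    calc ‖D‖ ≤ ‖A * (cfc f B - aeval B p)‖ + ‖(aeval C p - cfc f C) * A‖ := by
          rw [hDeq]; exact norm_add_le _ _
    _ ≤ ‖A‖ * ‖cfc f B - aeval B p‖ + ‖aeval C p - cfc f C‖ * ‖A‖ :=
          add_le_add (norm_mul_le _ _) (norm_mul_le _ _)
    _ ≤ ‖A‖ * ε + ε * ‖A‖ := by
          refine add_le_add (mul_le_mul_of_nonneg_left hnormB (norm_nonneg A)) ?_
          rw [norm_sub_rev] at hnormC
          exact mul_le_mul_of_nonneg_right hnormC (norm_nonneg A)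
    _ = 2 * ‖A‖ * ε := by ring
  have hA : (0 : ℝ) ≤ ‖A‖ := norm_nonneg A
  have h2A : (0 : ℝ) < 2 * (‖A‖ + 1) := by linarith
  have hεid : ε * (2 * (‖A‖ + 1)) = ‖D‖ := by
    rw [hε]
    field_simp
  nlinarith [hεpos, hbound, hεid]


lemma opAbs_eq_cfc_real (T : H →L[ℂ] H) :
    opAbs T = cfc Real.sqrt (ContinuousLinearMap.adjoint T * T) := by
  have hT : (0 : H →L[ℂ] H) ≤ ContinuousLinearMap.adjoint T * T := by
    simpa [ContinuousLinearMap.star_eq_adjoint] using star_mul_self_nonneg T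
  rw [opAbs, CFC.sqrt_eq_cfc, cfc_nnreal_eq_real _ _ hT]
  exact cfc_congr fun t _ => by rw [Real.sqrt]

lemma opAbs_nonneg (T : H →L[ℂ] H) : (0 : H →L[ℂ] H) ≤ opAbs T := CFC.sqrt_nonneg _

lemma mixed_schwarz_eps (A : H →L[ℂ] H) {ε : ℝ} (hε : 0 < ε) (x y : H) :
    ‖⟪A x, y⟫‖ ^ 2 ≤
      ((⟪opAbs A x, x⟫).re + ε * ‖x‖ ^ 2) * (⟪opAbs (ContinuousLinearMap.adjoint A) y, y⟫).re := by
  set B : H →L[ℂ] H := ContinuousLinearMap.adjoint A * A with hBdef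
  set C : H →L[ℂ] H := A * ContinuousLinearMap.adjoint A with hCdef
  have hB : (0 : H →L[ℂ] H) ≤ B := by
    simpa [ContinuousLinearMap.star_eq_adjoint] using star_mul_self_nonneg A
  have hC : (0 : H →L[ℂ] H) ≤ C := by
    have := star_mul_self_nonneg (ContinuousLinearMap.adjoint A)
    simpa [ContinuousLinearMap.star_eq_adjoint, ContinuousLinearMap.adjoint_adjoint] using this
  have hB_sa : IsSelfAdjoint B := IsSelfAdjoint.of_nonneg hB
  have hC_sa : IsSelfAdjoint C := IsSelfAdjoint.of_nonneg hC
  have hABC : A * B = C * A := by rw [hBdef, hCdef, mul_assoc]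
  -- functions
  have hsqrt_add_pos : ∀ t : ℝ, 0 < Real.sqrt t + ε := fun t => by
    have := Real.sqrt_nonneg t; linarith
  set hfun : ℝ → ℝ := fun t => Real.sqrt (Real.sqrt t + ε) with hhfun
  set gfun : ℝ → ℝ := fun t => (Real.sqrt t + ε)⁻¹ with hgfun
  have hfun_pos : ∀ t, 0 < hfun t := fun t => Real.sqrt_pos.mpr (hsqrt_add_pos t)
  have hfun_cont : Continuous hfun :=
    Real.continuous_sqrt.comp (Real.continuous_sqrt.add continuous_const)
  have hfuninv_cont : Continuous fun t => (hfun t)⁻¹ :=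
    hfun_cont.inv₀ fun t => (hfun_pos t).ne'
  have hg_cont : Continuous gfun :=
    (Real.continuous_sqrt.add continuous_const).inv₀ fun t => (hsqrt_add_pos t).ne'
  set u : H →L[ℂ] H := cfc hfun B with hu
  set w : H →L[ℂ] H := cfc (fun t => (hfun t)⁻¹) B with hw
  have hu_sa : IsSelfAdjoint u := cfc_predicate _ B
  have hw_sa : IsSelfAdjoint w := cfc_predicate _ B
  have hwu : w * u = 1 := by
    rw [hw, hu, ← cfc_mul _ _ B hfuninv_cont.continuousOn hfun_cont.continuousOn]
    have : cfc (fun t => (hfun t)⁻¹ * hfun t) B = cfc (fun _ : ℝ => (1 : ℝ)) B :=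
      cfc_congr fun t _ => inv_mul_cancel₀ (hfun_pos t).ne'
    rw [this, cfc_const 1 B hB_sa, map_one]
  have huu : u * u = cfc Real.sqrt B + algebraMap ℝ (H →L[ℂ] H) ε := by
    rw [hu, ← cfc_mul _ _ B hfun_cont.continuousOn hfun_cont.continuousOn]
    have h1 : cfc (fun t => hfun t * hfun t) B = cfc (fun t => Real.sqrt t + ε) B :=
      cfc_congr fun t _ => Real.mul_self_sqrt (hsqrt_add_pos t).le
    rw [h1, cfc_add (a := B) _ _ Real.continuous_sqrt.continuousOn continuous_const.continuousOn,
      cfc_const ε B hB_sa]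
  have hww : w * w = cfc gfun B := by
    rw [hw, ← cfc_mul _ _ B hfuninv_cont.continuousOn hfuninv_cont.continuousOn]
    refine cfc_congr fun t _ => ?_
    rw [← mul_inv, Real.mul_self_sqrt (hsqrt_add_pos t).le]
  have hint : A * cfc gfun B = cfc gfun C * A := cfc_intertwine hB_sa hC_sa hABC gfun hg_cont
  have hQbound : cfc gfun C * C ≤ cfc Real.sqrt C := by
    have hCid : C = cfc (fun t : ℝ => t) C := (cfc_id' ℝ C hC_sa).symm
    have hmul : cfc (fun t => gfun t * t) C = cfc gfun C * C := by
      rw [cfc_mul _ _ C hg_cont.continuousOn (by fun_prop : Continuous fun t : ℝ => t).continuousOn, cfc_id' ℝ C hC_sa]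
    calc cfc gfun C * C = cfc (fun t => gfun t * t) C := hmul.symm
    _ ≤ cfc Real.sqrt C := by
          refine cfc_mono (fun t ht => ?_) (by fun_prop : Continuous fun t => gfun t * t).continuousOn
            Real.continuous_sqrt.continuousOn
          have htnn : 0 ≤ t := spectrum_nonneg_of_nonneg hC ht
          have hst : Real.sqrt t * Real.sqrt t = t := Real.mul_self_sqrt htnn
          rw [hgfun]
          rw [inv_mul_le_iff₀ (hsqrt_add_pos t)]
          nlinarith [Real.sqrt_nonneg t]
  -- the vector computation
  set z : H := ContinuousLinearMap.adjoint A y with hz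
  have hAx : ⟪A x, y⟫ = ⟪u x, w z⟫ := by
    have h1 : (A * w) (u x) = A x := by
      rw [← ContinuousLinearMap.mul_apply, mul_assoc, hwu, mul_one]
    rw [← h1, ← ContinuousLinearMap.adjoint_inner_right]
    congr 1
    have : ContinuousLinearMap.adjoint (A * w) = w * ContinuousLinearMap.adjoint A := by
      rw [← ContinuousLinearMap.star_eq_adjoint, ← ContinuousLinearMap.star_eq_adjoint, star_mul]
      rw [hw_sa.star_eq]
    rw [this, ContinuousLinearMap.mul_apply, hz]
  have hCS : ‖⟪A x, y⟫‖ ≤ ‖u x‖ * ‖w z‖ := by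
    rw [hAx]; exact norm_inner_le_norm _ _
  have hxx : ⟪x, x⟫ = ((‖x‖ : ℂ)) ^ 2 := @inner_self_eq_norm_sq_to_K ℂ _ _ _ _ x
  have hux : ‖u x‖ ^ 2 = (⟪opAbs A x, x⟫).re + ε * ‖x‖ ^ 2 := by
    have h1 : (‖u x‖ : ℝ) ^ 2 = (⟪u x, u x⟫).re := by
      rw [@inner_self_eq_norm_sq_to_K ℂ _ _ _ _ (u x)]
      simp [← Complex.ofReal_pow]
    have h2 : ⟪u x, u x⟫ = ⟪(u * u) x, x⟫ := by
      rw [ContinuousLinearMap.mul_apply]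
      exact ((isSelfAdjoint_iff_isSymmetric.mp hu_sa) (u x) x).symm
    have h3 : (u * u) x = cfc Real.sqrt B x + ε • x := by
      rw [huu]
      rw [Algebra.algebraMap_eq_smul_one]
      simp
    rw [h1, h2, h3, inner_add_left, RCLike.real_smul_eq_coe_smul (K := ℂ) ε x, inner_smul_left,
      hxx, opAbs_eq_cfc_real, ← hBdef]
    simp [Complex.add_re, Complex.mul_re, ← Complex.ofReal_pow]
  have hwz : ‖w z‖ ^ 2 ≤ (⟪opAbs (ContinuousLinearMap.adjoint A) y, y⟫).re := by
    have h1 : (‖w z‖ : ℝ) ^ 2 = (⟪w z, w z⟫).re := by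
      rw [@inner_self_eq_norm_sq_to_K ℂ _ _ _ _ (w z)]
      simp [← Complex.ofReal_pow]
    have h2 : ⟪w z, w z⟫ = ⟪(cfc gfun C * C) y, y⟫ := by
      have h21 : ⟪w z, w z⟫ = ⟪(w * w) z, z⟫ := by
        rw [ContinuousLinearMap.mul_apply]
        exact ((isSelfAdjoint_iff_isSymmetric.mp hw_sa) (w z) z).symm
      rw [h21, hww, hz, ContinuousLinearMap.adjoint_inner_right,
        show A ((cfc gfun B) (ContinuousLinearMap.adjoint A y))
          = (A * cfc gfun B * ContinuousLinearMap.adjoint A) y from rfl, mul_assoc,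
        show A * (cfc gfun B * ContinuousLinearMap.adjoint A)
          = A * cfc gfun B * ContinuousLinearMap.adjoint A from (mul_assoc _ _ _).symm, hint,
        mul_assoc, ← hCdef]
    have h3 : opAbs (ContinuousLinearMap.adjoint A) = cfc Real.sqrt C := by
      rw [opAbs_eq_cfc_real, ContinuousLinearMap.adjoint_adjoint, ← hCdef]
    rw [h1, h2, h3]
    exact inner_re_mono hQbound y
  have huxnn : (0 : ℝ) ≤ ‖u x‖ ^ 2 := sq_nonneg _
  calc ‖⟪A x, y⟫‖ ^ 2 ≤ (‖u x‖ * ‖w z‖) ^ 2 := by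
        have := norm_nonneg (⟪A x, y⟫ : ℂ)
        nlinarith [hCS]
  _ = ‖u x‖ ^ 2 * ‖w z‖ ^ 2 := by ring
  _ ≤ ‖u x‖ ^ 2 * (⟪opAbs (ContinuousLinearMap.adjoint A) y, y⟫).re :=
        mul_le_mul_of_nonneg_left hwz huxnn
  _ = ((⟪opAbs A x, x⟫).re + ε * ‖x‖ ^ 2) * (⟪opAbs (ContinuousLinearMap.adjoint A) y, y⟫).re := by
        rw [hux]

lemma mixed_schwarz (A : H →L[ℂ] H) (x y : H) :
    ‖⟪A x, y⟫‖ ^ 2 ≤ (⟪opAbs A x, x⟫).re * (⟪opAbs (ContinuousLinearMap.adjoint A) y, y⟫).re := by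
  set b : ℝ := (⟪opAbs (ContinuousLinearMap.adjoint A) y, y⟫).re with hb
  have hbnn : 0 ≤ b := inner_re_nonneg (opAbs_nonneg _) y
  refine le_of_forall_pos_le_add fun δ hδ => ?_
  set ε : ℝ := δ / (‖x‖ ^ 2 * b + 1) with hε
  have hc : (0 : ℝ) ≤ ‖x‖ ^ 2 * b := mul_nonneg (sq_nonneg _) hbnn
  have hεpos : 0 < ε := by positivity
  have := mixed_schwarz_eps A hεpos x y
  have hle : ε * ‖x‖ ^ 2 * b ≤ δ := by
    rw [hε]
    rw [div_mul_eq_mul_div, div_mul_eq_mul_div, div_le_iff₀ (by positivity)]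
    nlinarith
  nlinarith [this]


lemma rpow_mul_self {T : H →L[ℂ] H} (hT : 0 ≤ T) {r : ℝ} (hr : 0 < r) :
    CFC.rpow T r * CFC.rpow T r = CFC.rpow T (2 * r) := by
  have hcont : ContinuousOn (fun x : ℝ≥0 => x ^ (r : ℝ)) (spectrum ℝ≥0 T) :=
    (NNReal.continuous_rpow_const hr.le).continuousOn
  rw [show CFC.rpow T r = cfc (fun x : ℝ≥0 => x ^ (r : ℝ)) T from rfl,
    show CFC.rpow T (2 * r) = cfc (fun x : ℝ≥0 => x ^ (2 * r : ℝ)) T from rfl,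
    ← cfc_mul _ _ T hcont hcont]
  refine cfc_congr fun t _ => ?_
  rw [show (2 : ℝ) * r = r + r by ring]
  exact (NNReal.rpow_add' (x := t) (y := r) (z := r) (by positivity)).symm

lemma rpow_inner_self_sq {T : H →L[ℂ] H} (hT : 0 ≤ T) {r : ℝ} (hr : 0 < r) (x : H) :
    ‖CFC.rpow T r x‖ ^ 2 = (⟪CFC.rpow T (2 * r) x, x⟫).re := by
  set S : H →L[ℂ] H := CFC.rpow T r with hS
  have hS_sa : IsSelfAdjoint S := IsSelfAdjoint.of_nonneg CFC.rpow_nonneg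
  have h1 : (‖S x‖ : ℝ) ^ 2 = (⟪S x, S x⟫).re := by
    rw [@inner_self_eq_norm_sq_to_K ℂ _ _ _ _ (S x)]
    simp [← Complex.ofReal_pow]
  have h2 : ⟪S x, S x⟫ = ⟪(S * S) x, x⟫ := by
    rw [ContinuousLinearMap.mul_apply]
    exact ((isSelfAdjoint_iff_isSymmetric.mp hS_sa) (S x) x).symm
  rw [h1, h2, hS, rpow_mul_self hT hr]

variable {Ω : Type*} [Nonempty Ω]

lemma le_ber (k : Ω → H) (hk : ∀ lam, ‖k lam‖ = 1) (T : H →L[ℂ] H) (lam : Ω) :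
    ‖⟪T (k lam), k lam⟫‖ ≤ ber k T := by
  have hbdd : BddAbove (Set.range fun lam : Ω => ‖⟪T (k lam), k lam⟫‖) := by
    refine ⟨‖T‖, ?_⟩
    rintro _ ⟨lam, rfl⟩
    calc ‖⟪T (k lam), k lam⟫‖ ≤ ‖T (k lam)‖ * ‖k lam‖ := norm_inner_le_norm _ _
    _ ≤ (‖T‖ * ‖k lam‖) * ‖k lam‖ :=
        mul_le_mul_of_nonneg_right (T.le_opNorm _) (norm_nonneg _)
    _ = ‖T‖ := by rw [hk]; ring
  exact le_ciSup hbdd lam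

lemma ber_nonneg (k : Ω → H) (hk : ∀ lam, ‖k lam‖ = 1) (T : H →L[ℂ] H) : 0 ≤ ber k T :=
  le_trans (norm_nonneg _) (le_ber k hk T (Classical.arbitrary Ω))

end Lemmas

theorem berezin_power_inequality_product_abs
    {H : Type*} [NormedAddCommGroup H] [InnerProductSpace ℂ H] [CompleteSpace H]
    {Ω : Type*} [Nonempty Ω] (k : Ω → H) (hk : ∀ lam, ‖k lam‖ = 1)
    (A : H →L[ℂ] H) (r : ℝ) (hr : 1 ≤ r) :
    ber k A ^ (2 * r) ≤
      (1 / 4 : ℝ) * ber k (CFC.rpow (opAbs A) (2 * r) + CFC.rpow (opAbs (adjoint A)) (2 * r))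
        + (1 / 2 : ℝ) * ber k (CFC.rpow (opAbs A) r * CFC.rpow (opAbs (adjoint A)) r) := by
  have hr0 : (0 : ℝ) < r := by linarith
  have h2r0 : (0 : ℝ) < 2 * r := by linarith
  set P : H →L[ℂ] H := opAbs A with hPdef
  set Q : H →L[ℂ] H := opAbs (adjoint A) with hQdef
  have hP : (0 : H →L[ℂ] H) ≤ P := opAbs_nonneg A
  have hQ : (0 : H →L[ℂ] H) ≤ Q := opAbs_nonneg (adjoint A)
  set Pr : H →L[ℂ] H := CFC.rpow P r with hPr_def
  set Qr : H →L[ℂ] H := CFC.rpow Q r with hQr_def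
  set P2r : H →L[ℂ] H := CFC.rpow P (2 * r) with hP2r_def
  set Q2r : H →L[ℂ] H := CFC.rpow Q (2 * r) with hQ2r_def
  have hPr : (0 : H →L[ℂ] H) ≤ Pr := CFC.rpow_nonneg
  have hQr : (0 : H →L[ℂ] H) ≤ Qr := CFC.rpow_nonneg
  have hPr_sa : IsSelfAdjoint Pr := IsSelfAdjoint.of_nonneg hPr
  set M : ℝ := (1 / 4 : ℝ) * ber k (P2r + Q2r) + (1 / 2 : ℝ) * ber k (Pr * Qr) with hM
  -- pointwise bound
  have hpoint : ∀ lam : Ω, ‖(inner ℂ (A (k lam)) (k lam) : ℂ)‖ ^ (2 * r) ≤ M := by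
    intro lam
    set x : H := k lam with hx_def
    have hx : ‖x‖ = 1 := hk lam
    set m : ℝ := ‖(inner ℂ (A x) x : ℂ)‖ with hm
    have hm0 : 0 ≤ m := norm_nonneg _
    set a : ℝ := (⟪P x, x⟫).re with ha
    set b : ℝ := (⟪Q x, x⟫).re with hb
    have ha0 : 0 ≤ a := inner_re_nonneg hP x
    have hb0 : 0 ≤ b := inner_re_nonneg hQ x
    set ar : ℝ := (⟪Pr x, x⟫).re with har
    set br : ℝ := (⟪Qr x, x⟫).re with hbr
    have har0 : 0 ≤ ar := inner_re_nonneg hPr x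
    have hbr0 : 0 ≤ br := inner_re_nonneg hQr x
    have h1 : m ^ 2 ≤ a * b := mixed_schwarz A x x
    have h2 : m ^ (2 * r) ≤ (a * b) ^ r := by
      have : m ^ (2 * r) = (m ^ 2) ^ r := by
        rw [← Real.rpow_natCast m 2, ← Real.rpow_mul hm0]
        norm_num
      rw [this]
      exact Real.rpow_le_rpow (by positivity) h1 hr0.le
    have h3 : (a * b) ^ r = a ^ r * b ^ r := Real.mul_rpow ha0 hb0
    have h4 : a ^ r ≤ ar := mccarthy hP hx hr
    have h5 : b ^ r ≤ br := mccarthy hQ hx hr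
    have h6 : m ^ (2 * r) ≤ ar * br := by
      calc m ^ (2 * r) ≤ a ^ r * b ^ r := by rw [← h3]; exact h2
      _ ≤ ar * br := by
        apply mul_le_mul h4 h5 (Real.rpow_nonneg hb0 r) har0
    -- Buzano
    have hbuz := my_buzano (Pr x) (Qr x) x hx
    have hb1 : ‖⟪Pr x, x⟫‖ = ar := norm_inner_of_nonneg hPr x
    have hb2 : ‖⟪x, Qr x⟫‖ = br := by
      rw [← inner_conj_symm, RCLike.norm_conj]
      exact norm_inner_of_nonneg hQr x
    rw [hb1, hb2] at hbuz
    -- first term: AM-GM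
    have hsq : ‖Pr x‖ ^ 2 + ‖Qr x‖ ^ 2 = (⟪(P2r + Q2r) x, x⟫).re := by
      rw [rpow_inner_self_sq hP hr0 x, rpow_inner_self_sq hQ hr0 x]
      rw [ContinuousLinearMap.add_apply, inner_add_left]
      simp [hP2r_def, hQ2r_def]
    have hamgm : ‖Pr x‖ * ‖Qr x‖ ≤ ((⟪(P2r + Q2r) x, x⟫).re) / 2 := by
      rw [← hsq]
      nlinarith [sq_nonneg (‖Pr x‖ - ‖Qr x‖)]
    have hterm1 : (⟪(P2r + Q2r) x, x⟫).re ≤ ber k (P2r + Q2r) := by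
      calc (⟪(P2r + Q2r) x, x⟫).re ≤ ‖⟪(P2r + Q2r) x, x⟫‖ := Complex.re_le_norm _
      _ ≤ ber k (P2r + Q2r) := le_ber k hk _ lam
    -- second term
    have hterm2 : ‖⟪Pr x, Qr x⟫‖ ≤ ber k (Pr * Qr) := by
      have : ⟪Pr x, Qr x⟫ = ⟪x, (Pr * Qr) x⟫ := by
        rw [ContinuousLinearMap.mul_apply]
        exact (isSelfAdjoint_iff_isSymmetric.mp hPr_sa) x (Qr x)
      rw [this, ← inner_conj_symm, RCLike.norm_conj]
      exact le_ber k hk _ lam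
    calc m ^ (2 * r) ≤ ar * br := h6
    _ ≤ (1 / 2 : ℝ) * (‖Pr x‖ * ‖Qr x‖ + ‖⟪Pr x, Qr x⟫‖) := by linarith
    _ ≤ M := by
        rw [hM]
        have := hamgm.trans (by linarith : ((⟪(P2r + Q2r) x, x⟫).re) / 2 ≤ ber k (P2r + Q2r) / 2)
        linarith
  -- conclude
  have hM0 : 0 ≤ M := le_trans (Real.rpow_nonneg (norm_nonneg _) _)
    (hpoint (Classical.arbitrary Ω))
  have hber_le : ber k A ≤ M ^ (1 / (2 * r)) := by
    refine ciSup_le fun lam => ?_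
    have hm0 : (0 : ℝ) ≤ ‖(inner ℂ (A (k lam)) (k lam) : ℂ)‖ := norm_nonneg _
    have hid : ‖(inner ℂ (A (k lam)) (k lam) : ℂ)‖
        = (‖(inner ℂ (A (k lam)) (k lam) : ℂ)‖ ^ (2 * r)) ^ (1 / (2 * r)) := by
      rw [← Real.rpow_mul hm0]
      rw [show (2 * r) * (1 / (2 * r)) = 1 by field_simp]
      exact (Real.rpow_one _).symm
    rw [hid]
    exact Real.rpow_le_rpow (Real.rpow_nonneg hm0 _) (hpoint lam) (by positivity)
  calc ber k A ^ (2 * r) ≤ (M ^ (1 / (2 * r))) ^ (2 * r) :=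
        Real.rpow_le_rpow (ber_nonneg k hk A) hber_le h2r0.le
  _ = M := by
        rw [← Real.rpow_mul hM0]
        rw [show (1 / (2 * r)) * (2 * r) = 1 by field_simp]
        exact Real.rpow_one M
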